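/- Let F be an algebraically closed field and G a finite group with |G| invertible in F. If ρ is an irreducible representation of G over F of dimension d with character χ, then the element e(ρ) = (d/|G|) · Σ_{g∈G} χ(g⁻¹)·g is an idempotent in the group algebra F[G]. -/

import Mathlib

open scoped BigOperators

namespace GroupCodeHulls

variable {K : Type*} [Field K] {G : Type*} [Group G]

/-- A (matrix) representation of `G` over `K` of degree `d`. -/
abbrev MatRep (K : Type*) [Field K] (G : Type*) [Group G] (d : ℕ) : Type _ :=
  G →* (Matrix (Fin d) (Fin d) K)ˣ

/-- A subspace `W ⊆ K^d` is invariant under the representation `ρ`. -/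
def IsInvariant {d : ℕ} (ρ : MatRep K G d) (W : Submodule K (Fin d → K)) : Prop :=
  ∀ g : G, ∀ x ∈ W, (ρ g : Matrix (Fin d) (Fin d) K).mulVec x ∈ W

/-- `ρ` is an irreducible representation. -/
def IsIrreducible {d : ℕ} (ρ : MatRep K G d) : Prop :=
  0 < d ∧ ∀ W : Submodule K (Fin d → K), IsInvariant ρ W → W = ⊥ ∨ W = ⊤

/-- Two representations are isomorphic. -/
def IsoRep {d₁ d₂ : ℕ} (ρ₁ : MatRep K G d₁) (ρ₂ : MatRep K G d₂) : Prop :=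
  ∃ T : (Fin d₁ → K) ≃ₗ[K] (Fin d₂ → K),
    ∀ (g : G) (x : Fin d₁ → K),
      T ((ρ₁ g : Matrix (Fin d₁) (Fin d₁) K).mulVec x)
        = (ρ₂ g : Matrix (Fin d₂) (Fin d₂) K).mulVec (T x)

/-- The character of a representation. -/
noncomputable def charOf {d : ℕ} (ρ : MatRep K G d) (g : G) : K :=
  Matrix.trace (ρ g : Matrix (Fin d) (Fin d) K)

/-- The element `e(ρ) = (d/|G|) ∑_g χ_ρ(g⁻¹) g` of the group algebra. -/
noncomputable def repIdem [Fintype G] {d : ℕ} (ρ : MatRep K G d) : MonoidAlgebra K G :=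
  ∑ g : G, MonoidAlgebra.single g ((d : K) * (Fintype.card G : K)⁻¹ * charOf ρ g⁻¹)

/-- The "transpose-inverse" of an invertible matrix, as a unit. -/
def contraUnit {n : Type*} [Fintype n] [DecidableEq n] (u : (Matrix n n K)ˣ) :
    (Matrix n n K)ˣ where
  val := Matrix.transpose (↑u⁻¹ : Matrix n n K)
  inv := Matrix.transpose (↑u : Matrix n n K)
  val_inv := by
    rw [← Matrix.transpose_mul, ← Units.val_mul, mul_inv_cancel, Units.val_one,
      Matrix.transpose_one]
  inv_val := by
    rw [← Matrix.transpose_mul, ← Units.val_mul, inv_mul_cancel, Units.val_one,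
      Matrix.transpose_one]

/-- The contragredient representation `g ↦ ᵀρ(g)⁻¹`. -/
def contra {d : ℕ} (ρ : MatRep K G d) : MatRep K G d where
  toFun g := contraUnit (ρ g)
  map_one' := by
    ext
    simp [contraUnit]
  map_mul' g h := by
    ext
    simp [contraUnit, mul_inv_rev, Matrix.transpose_mul]

/-- The Galois twist `σ ∘ ρ` of a representation. -/
def galConj {k : Type*} [Field k] [Algebra k K] (σ : K ≃ₐ[k] K) {d : ℕ}
    (ρ : MatRep K G d) : MatRep K G d :=
  (Units.map (AlgEquiv.mapMatrix σ :
      Matrix (Fin d) (Fin d) K ≃ₐ[k] Matrix (Fin d) (Fin d) K)) |>.comp ρ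

/-- `ρ₂` lies in the Galois orbit of (the isomorphism class of) `ρ₁`. -/
def SameOrbit (k : Type*) [Field k] [Algebra k K] {d₁ d₂ : ℕ}
    (ρ₁ : MatRep K G d₁) (ρ₂ : MatRep K G d₂) : Prop :=
  ∃ σ : K ≃ₐ[k] K, IsoRep (galConj σ ρ₁) ρ₂

/-- `τ 0, …, τ (s-1)` is a complete irredundant system of representatives of
the Galois orbit `[ρ]`; in particular `s = s(ρ)` is the size of the orbit. -/
def OrbitEnum (k : Type*) [Field k] [Algebra k K] {d : ℕ} (ρ : MatRep K G d)
    (s : ℕ) (τ : Fin s → MatRep K G d) : Prop :=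
  (∀ i, SameOrbit k ρ (τ i)) ∧
  (∀ i j, i ≠ j → ¬ IsoRep (τ i) (τ j)) ∧
  (∀ σ : K ≃ₐ[k] K, ∃ i, IsoRep (galConj σ ρ) (τ i))

/-- The star operation `(∑ f(g) g)* = ∑ f(g⁻¹) g` on the group algebra. -/
def starG (z : MonoidAlgebra K G) : MonoidAlgebra K G :=
  MonoidAlgebra.ofCoeff (Finsupp.equivMapDomain (Equiv.inv G) z.coeff)

/-- The Euclidean inner product on the group algebra with basis `G`. -/
noncomputable def eform [Fintype G] (u v : MonoidAlgebra K G) : K :=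
  ∑ g : G, u.coeff g * v.coeff g

/-- The underlying `K`-subspace of a two-sided ideal of `K[G]`. -/
def codeSub (C : TwoSidedIdeal (MonoidAlgebra K G)) :
    Submodule K (MonoidAlgebra K G) where
  carrier := C
  add_mem' := C.add_mem
  zero_mem' := C.zero_mem
  smul_mem' c x hx := by
    have h : (c • x : MonoidAlgebra K G) = algebraMap K (MonoidAlgebra K G) c * x :=
      Algebra.smul_def c x
    simpa [h] using C.mul_mem_left (algebraMap K (MonoidAlgebra K G) c) x hx

/-- The dual code of a two-sided ideal of `K[G]`, as a `K`-subspace. -/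
noncomputable def dualSub [Fintype G] (C : TwoSidedIdeal (MonoidAlgebra K G)) :
    Submodule K (MonoidAlgebra K G) where
  carrier := {v | ∀ u ∈ C, eform v u = 0}
  add_mem' := by
    intro a b ha hb u hu
    simp only [Set.mem_setOf_eq] at ha hb ⊢
    have h : eform (a + b) u = eform a u + eform b u := by
      unfold eform
      rw [← Finset.sum_add_distrib]
      exact Finset.sum_congr rfl fun g _ => by rw [MonoidAlgebra.coeff_add, Finsupp.add_apply, add_mul]
    rw [h, ha u hu, hb u hu, add_zero]
  zero_mem' := by
    intro u hu
    simp [eform]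
  smul_mem' := by
    intro c x hx u hu
    simp only [Set.mem_setOf_eq] at hx ⊢
    have h : eform (c • x) u = c * eform x u := by
      unfold eform
      rw [Finset.mul_sum]
      exact Finset.sum_congr rfl fun g _ => by
        rw [MonoidAlgebra.coeff_smul, Finsupp.smul_apply, smul_eq_mul, mul_assoc]
    rw [h, hx u hu, mul_zero]

/-- The hull `h(C) = C ∩ C^⊥` of a group code. -/
noncomputable def hullSub [Fintype G] (C : TwoSidedIdeal (MonoidAlgebra K G)) :
    Submodule K (MonoidAlgebra K G) :=
  codeSub C ⊓ dualSub C

/-- The dimension of the hull of a group code. -/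
noncomputable def hullDim [Fintype G] (C : TwoSidedIdeal (MonoidAlgebra K G)) : ℕ :=
  Module.finrank K ↥(hullSub C)


section AuxIdem

open Matrix

variable {F : Type*} [Field F] [IsAlgClosed F] {G' : Type*} [Group G']

/-- Schur's lemma: a matrix commuting with an irreducible representation is scalar. -/
lemma schur_scalar {d : ℕ} (ρ : MatRep F G' d) (hirr : IsIrreducible ρ)
    (M : Matrix (Fin d) (Fin d) F)
    (hM : ∀ g : G', (ρ g : Matrix (Fin d) (Fin d) F) * M
      = M * (ρ g : Matrix (Fin d) (Fin d) F)) :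
    ∃ c : F, M = c • (1 : Matrix (Fin d) (Fin d) F) := by
  obtain ⟨hd, hsub⟩ := hirr
  haveI : Nontrivial (Fin d → F) := ⟨Pi.single ⟨0, hd⟩ 1, 0, by
    intro hcontra
    have := congrFun hcontra ⟨0, hd⟩
    simp at this⟩
  obtain ⟨c, hc⟩ := Module.End.exists_eigenvalue (Matrix.mulVecLin M)
  refine ⟨c, ?_⟩
  set W := Module.End.eigenspace (Matrix.mulVecLin M) c with hW
  have hinv : IsInvariant ρ W := by
    intro g x hx
    rw [hW, Module.End.mem_eigenspace_iff] at hx ⊢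
    simp only [Matrix.mulVecLin_apply] at hx ⊢
    rw [Matrix.mulVec_mulVec, ← hM g, ← Matrix.mulVec_mulVec, hx, Matrix.mulVec_smul]
  have hWtop : W = ⊤ := by
    rcases hsub W hinv with h | h
    · exact absurd h hc
    · exact h
  have hall : ∀ x : Fin d → F, M.mulVec x = c • x := by
    intro x
    have hx : x ∈ W := hWtop ▸ Submodule.mem_top
    rw [hW, Module.End.mem_eigenspace_iff] at hx
    simpa using hx
  ext i j
  have := congrFun (hall (Pi.single j 1)) i
  simp only [Matrix.mulVec_single_one, Matrix.col_apply, mul_one, Pi.smul_apply, smul_eq_mul] at this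
  rw [this]
  simp [Matrix.one_apply, Pi.single_apply, eq_comm]

variable [Fintype G']

/-- Averaging a matrix over an irreducible representation yields a scalar matrix. -/
lemma avg_scalar {d : ℕ} (ρ : MatRep F G' d) (hirr : IsIrreducible ρ)
    (hd : (d : F) ≠ 0) (A : Matrix (Fin d) (Fin d) F) :
    ∑ g : G', (ρ g⁻¹ : Matrix (Fin d) (Fin d) F) * A * (ρ g : Matrix (Fin d) (Fin d) F)
      = ((Fintype.card G' : F) * Matrix.trace A * (d : F)⁻¹) • 1 := by
  set S := ∑ g : G', (ρ g⁻¹ : Matrix (Fin d) (Fin d) F) * A * (ρ g : Matrix (Fin d) (Fin d) F)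
    with hS
  have hcomm : ∀ h : G', (ρ h : Matrix (Fin d) (Fin d) F) * S
      = S * (ρ h : Matrix (Fin d) (Fin d) F) := by
    intro h
    rw [hS, Finset.mul_sum, Finset.sum_mul]
    have mval : ∀ a b : G', (ρ (a*b) : Matrix (Fin d) (Fin d) F)
        = (ρ a : Matrix (Fin d) (Fin d) F) * (ρ b : Matrix (Fin d) (Fin d) F) := by
      intro a b
      rw [MonoidHom.map_mul, Units.val_mul]
    refine Fintype.sum_equiv (Equiv.mulRight h⁻¹) _ _ ?_
    intro g
    simp only [Equiv.coe_mulRight]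
    have e1 : (ρ (g*h⁻¹)⁻¹ : Matrix (Fin d) (Fin d) F)
        = (ρ h : Matrix (Fin d) (Fin d) F) * (ρ g⁻¹ : Matrix (Fin d) (Fin d) F) := by
      rw [show (g*h⁻¹)⁻¹ = h * g⁻¹ by group, mval]
    have e2 : (ρ (g*h⁻¹) : Matrix (Fin d) (Fin d) F) * (ρ h : Matrix (Fin d) (Fin d) F)
        = (ρ g : Matrix (Fin d) (Fin d) F) := by
      rw [← mval]
      congr 1
      group
    rw [e1, ← e2]
    simp only [mul_assoc]
  obtain ⟨c, hc⟩ := schur_scalar ρ hirr S hcomm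
  have htr : Matrix.trace S = (Fintype.card G' : F) * Matrix.trace A := by
    rw [hS, Matrix.trace_sum]
    have : ∀ g : G', Matrix.trace ((ρ g⁻¹ : Matrix (Fin d) (Fin d) F) * A
        * (ρ g : Matrix (Fin d) (Fin d) F)) = Matrix.trace A := by
      intro g
      rw [Matrix.trace_mul_cycle, ← Units.val_mul, ← MonoidHom.map_mul, mul_inv_cancel,
        MonoidHom.map_one, Units.val_one, one_mul]
    rw [Finset.sum_congr rfl (fun g _ => this g), Finset.sum_const, Finset.card_univ,
      nsmul_eq_mul]
  rw [hc] at htr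
  rw [Matrix.trace_smul, Matrix.trace_one] at htr
  simp only [Fintype.card_fin, smul_eq_mul] at htr
  rw [hc]
  congr 1
  field_simp
  linear_combination htr

/-- The fundamental entrywise orthogonality relation. -/
lemma entry_orth {d : ℕ} (ρ : MatRep F G' d) (hirr : IsIrreducible ρ)
    (hd : (d : F) ≠ 0) (p r s q : Fin d) :
    ∑ g : G', (ρ g⁻¹ : Matrix (Fin d) (Fin d) F) p r * (ρ g : Matrix (Fin d) (Fin d) F) s q
      = (Fintype.card G' : F) * (if r = s then 1 else 0) * (d : F)⁻¹
        * (if p = q then 1 else 0) := by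
  have h := avg_scalar ρ hirr hd (Matrix.single r s (1:F))
  have h2 := congrFun (congrFun h p) q
  have lhs : ∀ g : G', ((ρ g⁻¹ : Matrix (Fin d) (Fin d) F) * Matrix.single r s (1:F)
      * (ρ g : Matrix (Fin d) (Fin d) F)) p q
      = (ρ g⁻¹ : Matrix (Fin d) (Fin d) F) p r * (ρ g : Matrix (Fin d) (Fin d) F) s q := by
    intro g
    rw [Matrix.mul_apply, Finset.sum_eq_single s]
    · simp
    · intro b _ hb; simp [hb]
    · simp
  have htrA : Matrix.trace (Matrix.single r s (1:F)) = if r = s then 1 else 0 := by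
    simp [Matrix.trace, Matrix.diag, Matrix.single, ite_and, Finset.sum_ite_eq]
    aesop
  rw [Matrix.sum_apply] at h2
  rw [Finset.sum_congr rfl (fun g _ => lhs g)] at h2
  rw [h2, htrA, Matrix.smul_apply, Matrix.one_apply, smul_eq_mul]

/-- The character convolution identity for an irreducible representation. -/
lemma char_conv {d : ℕ} (ρ : MatRep F G' d) (hirr : IsIrreducible ρ)
    (hd : (d : F) ≠ 0) (x : G') :
    ∑ g : G', charOf ρ g⁻¹ * charOf ρ (x⁻¹ * g)
      = (Fintype.card G' : F) * (d : F)⁻¹ * charOf ρ x⁻¹ := by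
  have hc1 : ∀ g : G', charOf ρ g⁻¹ = ∑ k, (ρ g⁻¹ : Matrix (Fin d) (Fin d) F) k k := by
    intro g
    simp [charOf, Matrix.trace, Matrix.diag]
  have hc2 : ∀ g : G', charOf ρ (x⁻¹ * g)
      = ∑ j, ∑ l, (ρ x⁻¹ : Matrix (Fin d) (Fin d) F) j l
          * (ρ g : Matrix (Fin d) (Fin d) F) l j := by
    intro g
    rw [charOf, MonoidHom.map_mul, Units.val_mul, Matrix.trace]
    simp [Matrix.diag, Matrix.mul_apply]
  calc ∑ g : G', charOf ρ g⁻¹ * charOf ρ (x⁻¹ * g)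
      = ∑ g : G', ∑ k, ∑ j, ∑ l, (ρ x⁻¹ : Matrix (Fin d) (Fin d) F) j l
          * ((ρ g⁻¹ : Matrix (Fin d) (Fin d) F) k k
            * (ρ g : Matrix (Fin d) (Fin d) F) l j) := by
        refine Finset.sum_congr rfl fun g _ => ?_
        rw [hc1 g, hc2 g, Finset.sum_mul]
        refine Finset.sum_congr rfl fun k _ => ?_
        rw [Finset.mul_sum]
        refine Finset.sum_congr rfl fun j _ => ?_
        rw [Finset.mul_sum]
        refine Finset.sum_congr rfl fun l _ => ?_
        ring
    _ = ∑ k, ∑ j, ∑ l, (ρ x⁻¹ : Matrix (Fin d) (Fin d) F) j l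
          * ∑ g : G', (ρ g⁻¹ : Matrix (Fin d) (Fin d) F) k k
            * (ρ g : Matrix (Fin d) (Fin d) F) l j := by
        rw [Finset.sum_comm]
        refine Finset.sum_congr rfl fun k _ => ?_
        rw [Finset.sum_comm]
        refine Finset.sum_congr rfl fun j _ => ?_
        rw [Finset.sum_comm]
        refine Finset.sum_congr rfl fun l _ => ?_
        rw [Finset.mul_sum]
    _ = ∑ k, ∑ j, ∑ l, (ρ x⁻¹ : Matrix (Fin d) (Fin d) F) j l
          * ((Fintype.card G' : F) * (if k = l then 1 else 0) * (d : F)⁻¹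
            * (if k = j then 1 else 0)) := by
        refine Finset.sum_congr rfl fun k _ => ?_
        refine Finset.sum_congr rfl fun j _ => ?_
        refine Finset.sum_congr rfl fun l _ => ?_
        rw [entry_orth ρ hirr hd k k l j]
    _ = (Fintype.card G' : F) * (d : F)⁻¹ * charOf ρ x⁻¹ := by
        rw [hc1 x]
        simp only [mul_ite, ite_mul, mul_one, mul_zero, one_mul, zero_mul,
          Finset.sum_ite_eq, Finset.sum_ite_eq', Finset.mem_univ, if_true]
        rw [Finset.mul_sum]
        refine Finset.sum_congr rfl fun k _ => ?_
        simp [Finset.sum_ite_eq]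
        ring

end AuxIdem

/-- For an irreducible representation `ρ` of `G` over an algebraically closed field `F`
with `|G|` invertible in `F`, the element `e(ρ) = (d/|G|) ∑ χ(g⁻¹) g` is an idempotent. -/
theorem repIdem_isIdempotent (F : Type*) [Field F] [IsAlgClosed F] (G : Type*) [Group G]
    [Fintype G] (h : IsUnit (Fintype.card G : F)) {d : ℕ} (ρ : MatRep F G d)
    (hirr : IsIrreducible ρ) :
    IsIdempotentElem (repIdem ρ) := by
  by_cases hdF : (d : F) = 0
  · have hzero : repIdem ρ = 0 := by
      simp [repIdem, hdF]
    rw [IsIdempotentElem, hzero, mul_zero]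
  · have hcard : (Fintype.card G : F) ≠ 0 := h.ne_zero
    unfold IsIdempotentElem repIdem
    set c : F := (d : F) * (Fintype.card G : F)⁻¹ with hc
    rw [Finset.sum_mul_sum]
    have step1 : ∀ g : G, ∑ h' : G, MonoidAlgebra.single g (c * charOf ρ g⁻¹)
        * MonoidAlgebra.single h' (c * charOf ρ h'⁻¹)
        = ∑ x : G, MonoidAlgebra.single x
            (c * charOf ρ g⁻¹ * (c * charOf ρ (x⁻¹ * g))) := by
      intro g
      refine Fintype.sum_equiv (Equiv.mulLeft g) _ _ ?_
      intro h'
      rw [MonoidAlgebra.single_mul_single]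
      simp only [Equiv.coe_mulLeft]
      congr 2
      rw [show (g * h')⁻¹ * g = h'⁻¹ by group]
    rw [Finset.sum_congr rfl (fun g _ => step1 g), Finset.sum_comm]
    refine Finset.sum_congr rfl fun x _ => ?_
    rw [show (∑ g : G, MonoidAlgebra.single x (c * charOf ρ g⁻¹ * (c * charOf ρ (x⁻¹ * g)))) = MonoidAlgebra.single x (∑ g : G, c * charOf ρ g⁻¹ * (c * charOf ρ (x⁻¹ * g))) from (map_sum (MonoidAlgebra.singleAddHom x) _ _).symm]
    congr 1
    have hsum : ∑ g : G, c * charOf ρ g⁻¹ * (c * charOf ρ (x⁻¹ * g))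
        = c * c * ∑ g : G, charOf ρ g⁻¹ * charOf ρ (x⁻¹ * g) := by
      rw [Finset.mul_sum]
      refine Finset.sum_congr rfl fun g _ => ?_
      ring
    rw [hsum, char_conv ρ hirr hdF x, hc]
    field_simp



end GroupCodeHulls
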